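/- Let ℓ be a line in ℝ² containing no point of S, and let w be the number of pairs {P, Q} of points of S such that PQ is a halving line of S and the points P and Q lie strictly on opposite sides of ℓ (i.e., the segment PQ straddles ℓ). Then n ≥ 2w. -/

import Mathlib

/-- Planar cross product (signed area determinant) of two vectors in `ℝ × ℝ`. -/
def det2 (u v : ℝ × ℝ) : ℝ := u.1 * v.2 - u.2 * v.1

/-- Dot product of two vectors in `ℝ × ℝ`. -/
def dot2 (u v : ℝ × ℝ) : ℝ := u.1 * v.1 + u.2 * v.2

/-- A finite set of points of the plane is in general position if no three
distinct points of it are collinear. -/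
def GenPos (S : Finset (ℝ × ℝ)) : Prop :=
  ∀ P ∈ S, ∀ Q ∈ S, ∀ R ∈ S, P ≠ Q → P ≠ R → Q ≠ R →
    ¬ Collinear ℝ ({P, Q, R} : Set (ℝ × ℝ))

/-- The line through the two distinct points `P, Q ∈ S` is a halving line of `S`:
each of the two open half-planes it determines contains exactly
`(S.card - 2) / 2` points of `S`. -/
def IsHalving (S : Finset (ℝ × ℝ)) (P Q : ℝ × ℝ) : Prop :=
  P ∈ S ∧ Q ∈ S ∧ P ≠ Q ∧
  {X ∈ (S : Set (ℝ × ℝ)) | 0 < det2 (Q - P) (X - P)}.ncard = (S.card - 2) / 2 ∧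
  {X ∈ (S : Set (ℝ × ℝ)) | det2 (Q - P) (X - P) < 0}.ncard = (S.card - 2) / 2

/-- Degree of a point in the underlying graph of `S`: the number of points `Q`
such that the line `PQ` is a halving line of `S`. -/
noncomputable def hdeg (S : Finset (ℝ × ℝ)) (P : ℝ × ℝ) : ℕ :=
  {Q : ℝ × ℝ | IsHalving S P Q}.ncard

/-- The number of halving lines of `S`, counted as unordered pairs of points. -/
noncomputable def numHalvingLines (S : Finset (ℝ × ℝ)) : ℕ :=
  {e : Finset (ℝ × ℝ) | ∃ P Q : ℝ × ℝ, e = {P, Q} ∧ IsHalving S P Q}.ncard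

/-- The underlying graph of `S`: vertices are the points of `S`, and two points
are adjacent exactly when the line through them is a halving line of `S`. -/
def underlyingGraph (S : Finset (ℝ × ℝ)) : SimpleGraph {x : ℝ × ℝ // x ∈ S} where
  Adj P Q := IsHalving S P.1 Q.1 ∧ IsHalving S Q.1 P.1
  symm := ⟨fun _ _ h => ⟨h.2, h.1⟩⟩
  loopless := ⟨fun _ h => h.1.2.2.1 rfl⟩

lemma pluecker (d u v : ℝ × ℝ) :
    dot2 d u * det2 d v - dot2 d v * det2 d u = dot2 d d * det2 u v := by
  simp only [dot2, det2]; ring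

lemma inj_dot_det {a p q : ℝ × ℝ} (ha : a ≠ 0) (h1 : dot2 a p = dot2 a q)
    (h2 : det2 a p = det2 a q) : p = q := by
  have ha' : a.1 ≠ 0 ∨ a.2 ≠ 0 := by
    by_contra h; push_neg at h; exact ha (Prod.ext h.1 h.2)
  simp only [dot2, det2] at h1 h2
  have hs : a.1^2 + a.2^2 > 0 := by
    rcases ha' with h | h <;> positivity
  have e1 : (a.1^2 + a.2^2) * (p.1 - q.1) = 0 := by linear_combination a.1 * h1 - a.2 * h2
  have e2 : (a.1^2 + a.2^2) * (p.2 - q.2) = 0 := by linear_combination a.2 * h1 + a.1 * h2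
  have c1 : p.1 = q.1 := by rcases mul_eq_zero.1 e1 with h | h <;> linarith
  have c2 : p.2 = q.2 := by rcases mul_eq_zero.1 e2 with h | h <;> linarith
  exact Prod.ext c1 c2

lemma collinear_of_det2 {p q r : ℝ × ℝ} (h : det2 (q - p) (r - p) = 0) :
    Collinear ℝ ({p, q, r} : Set (ℝ × ℝ)) := by
  by_cases hqp : q = p
  · have hset : ({p, q, r} : Set (ℝ × ℝ)) = {p, r} := by rw [hqp]; simp
    rw [hset]; exact collinear_pair ℝ p r
  · rw [collinear_iff_of_mem (Set.mem_insert p {q, r})]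
    refine ⟨q - p, ?_⟩
    intro x hx
    have key : ∀ t : ℝ, x.1 = t * (q.1 - p.1) + p.1 → x.2 = t * (q.2 - p.2) + p.2 →
        ∃ t : ℝ, x = t • (q - p) +ᵥ p := by
      intro t h1 h2
      refine ⟨t, ?_⟩
      apply Prod.ext <;>
        simp only [vadd_eq_add, Prod.fst_add, Prod.snd_add, Prod.smul_fst, Prod.smul_snd,
          Prod.fst_sub, Prod.snd_sub, smul_eq_mul]
      · exact h1
      · exact h2
    rcases hx with rfl | rfl | hx
    · exact key 0 (by ring) (by ring)
    · exact key 1 (by ring) (by ring)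
    · have hxr : x = r := hx
      subst hxr
      have hu : (q - p).1 ≠ 0 ∨ (q - p).2 ≠ 0 := by
        by_contra hc; push_neg at hc
        exact hqp (by apply sub_eq_zero.1; exact Prod.ext hc.1 hc.2)
      simp only [det2, Prod.fst_sub, Prod.snd_sub] at h hu
      rcases hu with hu | hu
      · refine key ((x.1 - p.1) / (q.1 - p.1)) (by field_simp; ring) ?_
        field_simp
        nlinarith [h]
      · refine key ((x.2 - p.2) / (q.2 - p.2)) ?_ (by field_simp; ring)
        field_simp
        nlinarith [h]



open Finset

lemma crossing_identity {β : Type*} [DecidableEq β] (τ : β → ℝ) (s : β → ℤ) (h m : ℤ) :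
    ∀ (T : Finset β), (∀ q ∈ T, ∀ r ∈ T, τ q = τ r → q = r) →
      (∀ q ∈ T, s q = 1 ∨ s q = -1) →
    (((T.filter (fun q => s q = 1 ∧ h + ∑ r ∈ T.filter (fun r => τ q < τ r), s r = m)).card : ℤ)
      - ((T.filter (fun q => s q = -1 ∧ h + ∑ r ∈ T.filter (fun r => τ q < τ r), s r = m + 1)).card : ℤ))
    = (if m + 1 ≤ h + ∑ r ∈ T, s r then 1 else 0) - (if m + 1 ≤ h then 1 else 0) := by
  classical
  intro T
  induction T using Finset.strongInduction with
  | _ T ih =>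
    intro hinj hs
    rcases T.eq_empty_or_nonempty with rfl | hne
    · simp
    · obtain ⟨q₀, hq₀T, hq₀min⟩ := T.exists_min_image τ hne
      set T' := T.erase q₀ with hT'
      have hq₀T' : q₀ ∉ T' := Finset.notMem_erase _ _
      have hins : T = insert q₀ T' := by rw [hT', Finset.insert_erase hq₀T]
      have hbef0 : T.filter (fun r => τ q₀ < τ r) = T' := by
        ext r
        simp only [Finset.mem_filter, hT', Finset.mem_erase]
        constructor
        · rintro ⟨hr, hlt⟩; exact ⟨fun he => by subst he; exact lt_irrefl _ hlt, hr⟩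
        · rintro ⟨hne', hr⟩
          refine ⟨hr, lt_of_le_of_ne (hq₀min r hr) ?_⟩
          intro he; exact hne' (hinj r hr q₀ hq₀T he.symm)
      have hbef : ∀ q ∈ T', T.filter (fun r => τ q < τ r) = T'.filter (fun r => τ q < τ r) := by
        intro q hq
        rw [hT', Finset.filter_erase]
        rw [Finset.erase_eq_of_notMem]
        simp only [Finset.mem_filter]
        rintro ⟨hq₀T2, hlt⟩
        exact absurd hlt (not_lt.2 (hq₀min q (Finset.mem_of_mem_erase hq)))
      set F : ℤ := h + ∑ r ∈ T', s r with hF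
      have hsum : h + ∑ r ∈ T, s r = F + s q₀ := by
        rw [hins, Finset.sum_insert hq₀T', hF]; ring
      have hcard : ∀ (w : ℤ),
          (T.filter (fun q => s q = w ∧ h + ∑ r ∈ T.filter (fun r => τ q < τ r), s r = m + (if w = 1 then 0 else 1))).card
          = (T'.filter (fun q => s q = w ∧ h + ∑ r ∈ T'.filter (fun r => τ q < τ r), s r = m + (if w = 1 then 0 else 1))).card
            + (if s q₀ = w ∧ F = m + (if w = 1 then 0 else 1) then 1 else 0) := by
        intro w
        have hpred : ∀ q ∈ T, ((s q = w ∧ h + ∑ r ∈ T.filter (fun r => τ q < τ r), s r = m + (if w = 1 then 0 else 1))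
            ↔ (s q = w ∧ ((if q = q₀ then F else h + ∑ r ∈ T'.filter (fun r => τ q < τ r), s r) = m + (if w = 1 then 0 else 1)))) := by
          intro q hq
          by_cases hqq : q = q₀
          · subst hqq; rw [hbef0, if_pos rfl, hF]
          · have hqT' : q ∈ T' := by rw [hT', Finset.mem_erase]; exact ⟨hqq, hq⟩
            rw [hbef q hqT', if_neg hqq]
        rw [Finset.filter_congr hpred, hins, Finset.filter_insert]
        have hsimp : ∀ q ∈ T', ((s q = w ∧ ((if q = q₀ then F else h + ∑ r ∈ T'.filter (fun r => τ q < τ r), s r) = m + (if w = 1 then 0 else 1)))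
            ↔ (s q = w ∧ h + ∑ r ∈ T'.filter (fun r => τ q < τ r), s r = m + (if w = 1 then 0 else 1))) := by
          intro q hq
          rw [if_neg]; intro he; exact hq₀T' (he ▸ hq)
        rw [Finset.filter_congr hsimp]
        simp only [if_pos rfl, if_true]
        by_cases hc : s q₀ = w ∧ F = m + (if w = 1 then 0 else 1)
        · rw [if_pos hc, if_pos hc, Finset.card_insert_of_notMem]
          intro hmem; exact hq₀T' (Finset.mem_filter.1 hmem).1
        · rw [if_neg hc, if_neg hc, add_zero]
      have IH := ih T' (Finset.erase_ssubset hq₀T)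
        (fun q hq r hr he => hinj q (Finset.mem_of_mem_erase hq) r (Finset.mem_of_mem_erase hr) he)
        (fun q hq => hs q (Finset.mem_of_mem_erase hq))
      have h1 := hcard 1
      have h2 := hcard (-1)
      norm_num at h1 h2
      rw [hsum]
      push_cast [h1, h2]
      rcases hs q₀ hq₀T with hv | hv <;> simp only [hv] <;> norm_num <;>
        split_ifs at IH ⊢ <;> omega


lemma det2_neg_left (u v : ℝ × ℝ) : det2 (-u) v = - det2 u v := by
  simp [det2]; ring
lemma det2_zero_right (u : ℝ × ℝ) : det2 u 0 = 0 := by simp [det2]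
lemma det2_self (u : ℝ × ℝ) : det2 u u = 0 := by simp [det2]; ring
lemma det2_neg_right (u v : ℝ × ℝ) : det2 u (-v) = - det2 u v := by
  simp [det2]; ring

open scoped Classical in
lemma isHalving_iff (S : Finset (ℝ × ℝ)) (hgp : GenPos S) (heven : Even S.card)
    {p q : ℝ × ℝ} (hp : p ∈ S) (hq : q ∈ S) (hpq : p ≠ q) :
    IsHalving S p q ↔
      (S.filter (fun r => 0 < det2 (q - p) (r - p))).card = (S.card - 2) / 2 := by
  have hcoe1 : {X ∈ (S : Set (ℝ × ℝ)) | 0 < det2 (q - p) (X - p)}.ncard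
      = (S.filter (fun r => 0 < det2 (q - p) (r - p))).card := by
    rw [show {X ∈ (S : Set (ℝ × ℝ)) | 0 < det2 (q - p) (X - p)}
        = ((S.filter (fun r => 0 < det2 (q - p) (r - p)) : Finset (ℝ × ℝ)) : Set (ℝ × ℝ)) from by
      ext x; simp [Finset.mem_filter], Set.ncard_coe_finset]
  have hcoe2 : {X ∈ (S : Set (ℝ × ℝ)) | det2 (q - p) (X - p) < 0}.ncard
      = (S.filter (fun r => det2 (q - p) (r - p) < 0)).card := by
    rw [show {X ∈ (S : Set (ℝ × ℝ)) | det2 (q - p) (X - p) < 0}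
        = ((S.filter (fun r => det2 (q - p) (r - p) < 0) : Finset (ℝ × ℝ)) : Set (ℝ × ℝ)) from by
      ext x; simp [Finset.mem_filter], Set.ncard_coe_finset]
  have hzero : S.filter (fun r => det2 (q - p) (r - p) = 0) = {p, q} := by
    ext r
    simp only [Finset.mem_filter, Finset.mem_insert, Finset.mem_singleton]
    constructor
    · rintro ⟨hr, hdet⟩
      by_contra hc
      push_neg at hc
      exact hgp p hp q hq r hr hpq (Ne.symm hc.1) (Ne.symm hc.2) (collinear_of_det2 hdet)
    · rintro (rfl | rfl)
      · exact ⟨hp, by rw [sub_self]; exact det2_zero_right _⟩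
      · exact ⟨hq, det2_self _⟩
  have hz2 : (S.filter (fun r => det2 (q - p) (r - p) = 0)).card = 2 := by
    rw [hzero]; rw [Finset.card_insert_of_notMem (by simpa using hpq), Finset.card_singleton]
  have hsplit : (S.filter (fun r => ¬ det2 (q - p) (r - p) = 0))
      = S.filter (fun r => 0 < det2 (q - p) (r - p)) ∪ S.filter (fun r => det2 (q - p) (r - p) < 0) := by
    ext r
    simp only [Finset.mem_filter, Finset.mem_union]
    constructor
    · rintro ⟨hr, hne⟩
      rcases lt_trichotomy (det2 (q - p) (r - p)) 0 with hlt | he | hgt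
      · exact Or.inr ⟨hr, hlt⟩
      · exact absurd he hne
      · exact Or.inl ⟨hr, hgt⟩
    · rintro (⟨hr, hh⟩ | ⟨hr, hh⟩) <;> exact ⟨hr, by intro he; rw [he] at hh; exact lt_irrefl _ hh⟩
  have hdisj : Disjoint (S.filter (fun r => 0 < det2 (q - p) (r - p)))
      (S.filter (fun r => det2 (q - p) (r - p) < 0)) := by
    rw [Finset.disjoint_left]
    intro r h1 h2
    simp only [Finset.mem_filter] at h1 h2
    exact lt_irrefl _ (h1.2.trans h2.2)
  have htot : (S.filter (fun r => 0 < det2 (q - p) (r - p))).card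
      + (S.filter (fun r => det2 (q - p) (r - p) < 0)).card = S.card - 2 := by
    have h1 := Finset.card_filter_add_card_filter_not
      (s := S) (p := fun r => det2 (q - p) (r - p) = 0)
    rw [hz2, hsplit, Finset.card_union_of_disjoint hdisj] at h1
    omega
  obtain ⟨t, ht⟩ := heven
  have h2card : 2 ≤ S.card := Finset.one_lt_card.2 ⟨p, hp, q, hq, hpq⟩
  constructor
  · intro hh
    rw [← hcoe1]
    exact hh.2.2.2.1
  · intro hh
    refine ⟨hp, hq, hpq, by rw [hcoe1]; exact hh, by rw [hcoe2]; omega⟩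

open scoped Classical in
lemma perpoint (S : Finset (ℝ × ℝ)) (hgp : GenPos S) (heven : Even S.card)
    (h2 : 2 ≤ S.card) (key : ℝ × ℝ → ℝ) (d : ℝ × ℝ)
    (hkey : ∀ x y : ℝ × ℝ, det2 d (x - y) = key x - key y)
    (hkinj : ∀ x ∈ S, ∀ y ∈ S, key x = key y → x = y)
    {p : ℝ × ℝ} (hp : p ∈ S) :
    (((S.filter (fun q => IsHalving S p q ∧ key p < key q)).card : ℤ)
      - ((S.filter (fun q => IsHalving S p q ∧ key q < key p)).card : ℤ)) ≤ 1 ∧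
    (((S.filter (fun q => IsHalving S p q ∧ key q < key p)).card : ℤ)
      - ((S.filter (fun q => IsHalving S p q ∧ key p < key q)).card : ℤ)) ≤ 1 := by
  set T := S.erase p with hT
  have hTmem : ∀ {q : ℝ × ℝ}, q ∈ T → q ∈ S ∧ q ≠ p := by
    intro q hq
    exact ⟨Finset.mem_of_mem_erase hq, Finset.ne_of_mem_erase hq⟩
  have hTne : T.Nonempty := by
    rw [← Finset.card_pos, hT, Finset.card_erase_of_mem hp]; omega
  -- key values differ from key p on T
  have hkne : ∀ q ∈ T, key q ≠ key p := by
    intro q hq he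
    exact (hTmem hq).2 (hkinj q (hTmem hq).1 p hp he)
  set u : ℝ × ℝ → ℝ × ℝ := fun q => if key p < key q then q - p else p - q with hu
  set s : ℝ × ℝ → ℤ := fun q => if key p < key q then (-1 : ℤ) else 1 with hs
  have hupos : ∀ q ∈ T, 0 < det2 d (u q) := by
    intro q hq
    by_cases hcase : key p < key q
    · rw [hu]; simp only [if_pos hcase]; rw [hkey]; linarith
    · have : key q < key p := lt_of_le_of_ne (not_lt.1 hcase) (hkne q hq)
      rw [hu]; simp only [if_neg hcase]; rw [hkey]; linarith
  have hdd : 0 < dot2 d d := by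
    obtain ⟨q, hq⟩ := hTne
    have h1 := hupos q hq
    have hd0 : d ≠ 0 := by
      intro he; rw [he] at h1; simp [det2] at h1
    have hd1 : d.1 ≠ 0 ∨ d.2 ≠ 0 := by
      by_contra hc; push_neg at hc; exact hd0 (Prod.ext hc.1 hc.2)
    simp only [dot2]
    rcases hd1 with h | h <;> nlinarith [mul_self_nonneg d.1, mul_self_nonneg d.2, mul_self_pos.2 h]
  set τ : ℝ × ℝ → ℝ := fun q => dot2 d (u q) / det2 d (u q) with hτ
  have hkeyid : ∀ q ∈ T, ∀ r ∈ T,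
      (τ q - τ r) * (det2 d (u q) * det2 d (u r)) = dot2 d d * det2 (u q) (u r) := by
    intro q hq r hr
    have hq0 := hupos q hq
    have hr0 := hupos r hr
    rw [hτ]
    simp only
    rw [div_sub_div _ _ (ne_of_gt hq0) (ne_of_gt hr0), div_mul_eq_mul_div,
      div_eq_iff (by positivity)]
    rw [← pluecker d (u q) (u r)]
    ring
  have hsign : ∀ q ∈ T, ∀ r ∈ T, (0 < det2 (u q) (u r) ↔ τ r < τ q) := by
    intro q hq r hr
    have e := hkeyid q hq r hr
    have hBD : 0 < det2 d (u q) * det2 d (u r) := mul_pos (hupos q hq) (hupos r hr)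
    constructor
    · intro hpos; nlinarith
    · intro hlt; nlinarith
  have hτinj : ∀ q ∈ T, ∀ r ∈ T, τ q = τ r → q = r := by
    intro q hq r hr he
    by_contra hne
    have e := hkeyid q hq r hr
    rw [he, sub_self, zero_mul] at e
    have hdet0 : det2 (u q) (u r) = 0 := by
      by_contra hd
      rcases lt_trichotomy (det2 (u q) (u r)) 0 with hx | hx | hx
      · nlinarith
      · exact hd hx
      · nlinarith
    have hqr0 : det2 (q - p) (r - p) = 0 := by
      rw [hu] at hdet0
      simp only at hdet0
      by_cases c1 : key p < key q <;> by_cases c2 : key p < key r <;>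
        simp only [if_pos, if_neg, c1, c2, if_true, if_false] at hdet0
      · exact hdet0
      · rw [show p - r = -(r - p) from (neg_sub r p).symm, det2_neg_right] at hdet0
        linarith
      · rw [show p - q = -(q - p) from (neg_sub q p).symm, det2_neg_left] at hdet0
        linarith
      · rw [show p - q = -(q - p) from (neg_sub q p).symm,
          show p - r = -(r - p) from (neg_sub r p).symm, det2_neg_left, det2_neg_right] at hdet0
        linarith
    exact hgp p hp q (hTmem hq).1 r (hTmem hr).1 (Ne.symm (hTmem hq).2) (Ne.symm (hTmem hr).2)
      hne (collinear_of_det2 hqr0)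
  have hsign2 : ∀ q ∈ T, ∀ r ∈ T, q ≠ r → (det2 (u q) (u r) < 0 ↔ τ q < τ r) := by
    intro q hq r hr hne
    have h1 := hsign q hq r hr
    have hτne : τ q ≠ τ r := fun he => hne (hτinj q hq r hr he)
    constructor
    · intro hlt
      rcases lt_trichotomy (τ q) (τ r) with hx | hx | hx
      · exact hx
      · exact absurd hx hτne
      · exact absurd (h1.2 hx) (by linarith)
    · intro hlt
      rcases lt_trichotomy (det2 (u q) (u r)) 0 with hx | hx | hx
      · exact hx
      · exfalso
        have e := hkeyid q hq r hr
        rw [hx, mul_zero] at e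
        have hBD : 0 < det2 d (u q) * det2 d (u r) := mul_pos (hupos q hq) (hupos r hr)
        nlinarith
      · exact absurd (h1.1 hx) (by linarith)
  -- counting part
  set h₀ : ℤ := ((T.filter (fun r => key p < key r)).card : ℤ) with hh₀
  set Lev : ℝ × ℝ → ℤ := fun q => h₀ + ∑ r ∈ T.filter (fun r => τ q < τ r), s r with hLev
  have hqp_ne : ∀ q ∈ T, q ≠ p := fun q hq => (hTmem hq).2
  have hcnt : ∀ q ∈ T,
      (key p < key q → ((S.filter (fun r => 0 < det2 (q - p) (r - p))).card : ℤ) = Lev q - 1)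
      ∧ (¬ key p < key q → ((S.filter (fun r => 0 < det2 (q - p) (r - p))).card : ℤ)
          = (S.card : ℤ) - 2 - Lev q) := by
    intro q hq
    have hqS := (hTmem hq).1
    set A1 := T.filter (fun r => (key p < key r) ∧ τ r < τ q) with hA1
    set A2 := T.filter (fun r => (key p < key r) ∧ τ q < τ r) with hA2
    set B1 := T.filter (fun r => ¬ (key p < key r) ∧ τ r < τ q) with hB1
    set B2 := T.filter (fun r => ¬ (key p < key r) ∧ τ q < τ r) with hB2
    have hsumBefore : ∑ r ∈ T.filter (fun r => τ q < τ r), s r = (B2.card : ℤ) - A2.card := by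
      have hsplit2 : T.filter (fun r => τ q < τ r) = A2 ∪ B2 := by
        ext r
        simp only [hA2, hB2, Finset.mem_union, Finset.mem_filter]
        tauto
      have hdisj2 : Disjoint A2 B2 := by
        rw [Finset.disjoint_left]
        intro r h1 h2
        simp only [hA2, hB2, Finset.mem_filter] at h1 h2
        exact h2.2.1 h1.2.1
      rw [hsplit2, Finset.sum_union hdisj2]
      have e1 : ∑ r ∈ A2, s r = -(A2.card : ℤ) := by
        rw [Finset.sum_congr rfl (g := fun _ => (-1 : ℤ))
          (fun r hr => by
            simp only [hA2, Finset.mem_filter] at hr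
            simp only [hs, if_pos hr.2.1])]
        simp
      have e2 : ∑ r ∈ B2, s r = (B2.card : ℤ) := by
        rw [Finset.sum_congr rfl (g := fun _ => (1 : ℤ))
          (fun r hr => by
            simp only [hB2, Finset.mem_filter] at hr
            simp only [hs, if_neg hr.2.1])]
        simp
      rw [e1, e2]; ring
    have hLevq : Lev q = h₀ + (B2.card : ℤ) - A2.card := by
      rw [hLev]; simp only; rw [hsumBefore]; ring
    have hTq : ∀ r ∈ T, r ≠ q → key p < key r → (0 < det2 (q - p) (r - p) ↔
        (if key p < key q then τ r < τ q else τ q < τ r)) := by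
      intro r hr hrq hkr
      have hur : u r = r - p := by rw [hu]; simp only [if_pos hkr]
      by_cases hkq : key p < key q
      · have huq : u q = q - p := by rw [hu]; simp only [if_pos hkq]
        rw [if_pos hkq, ← hsign q hq r hr, huq, hur]
      · have huq : u q = p - q := by rw [hu]; simp only [if_neg hkq]
        rw [if_neg hkq, ← hsign2 q hq r hr (fun he => hkq (he ▸ hkr)), huq, hur,
          show p - q = -(q - p) from (neg_sub q p).symm, det2_neg_left]
        constructor
        · intro hh; linarith
        · intro hh; linarith
    have hTq' : ∀ r ∈ T, r ≠ q → ¬ key p < key r → (0 < det2 (q - p) (r - p) ↔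
        (if key p < key q then τ q < τ r else τ r < τ q)) := by
      intro r hr hrq hkr
      have hur : u r = p - r := by rw [hu]; simp only [if_neg hkr]
      by_cases hkq : key p < key q
      · have huq : u q = q - p := by rw [hu]; simp only [if_pos hkq]
        rw [if_pos hkq, ← hsign2 q hq r hr (fun he => hkr (he ▸ hkq)), huq, hur,
          show p - r = -(r - p) from (neg_sub r p).symm, det2_neg_right]
        constructor
        · intro hh; linarith
        · intro hh; linarith
      · have huq : u q = p - q := by rw [hu]; simp only [if_neg hkq]
        rw [if_neg hkq, ← hsign q hq r hr, huq, hur,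
          show p - q = -(q - p) from (neg_sub q p).symm,
          show p - r = -(r - p) from (neg_sub r p).symm, det2_neg_left, det2_neg_right]
        constructor
        · intro hh; linarith
        · intro hh; linarith
    have hmemS : ∀ r, r ∈ S ∧ 0 < det2 (q - p) (r - p) ↔ (r ∈ T ∧ r ≠ q ∧ 0 < det2 (q - p) (r - p)) := by
      intro r
      constructor
      · rintro ⟨hrS, hdet⟩
        have hrp : r ≠ p := by
          rintro rfl
          rw [sub_self, det2_zero_right] at hdet
          exact lt_irrefl _ hdet
        have hrq : r ≠ q := by
          rintro rfl
          rw [det2_self] at hdet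
          exact lt_irrefl _ hdet
        exact ⟨Finset.mem_erase.2 ⟨hrp, hrS⟩, hrq, hdet⟩
      · rintro ⟨hrT, _, hdet⟩
        exact ⟨(hTmem hrT).1, hdet⟩
    have hdisjA1B2 : Disjoint A1 B2 := by
      rw [Finset.disjoint_left]
      intro r h1 h2
      simp only [hA1, hB2, Finset.mem_filter] at h1 h2
      exact h2.2.1 h1.2.1
    have hdisjA2B1 : Disjoint A2 B1 := by
      rw [Finset.disjoint_left]
      intro r h1 h2
      simp only [hA2, hB1, Finset.mem_filter] at h1 h2
      exact h2.2.1 h1.2.1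
    have hdisjA1A2 : Disjoint A1 A2 := by
      rw [Finset.disjoint_left]
      intro r h1 h2
      simp only [hA1, hA2, Finset.mem_filter] at h1 h2
      exact lt_irrefl _ (h1.2.2.trans h2.2.2)
    have hdisjB1B2 : Disjoint B1 B2 := by
      rw [Finset.disjoint_left]
      intro r h1 h2
      simp only [hB1, hB2, Finset.mem_filter] at h1 h2
      exact lt_irrefl _ (h1.2.2.trans h2.2.2)
    have hTcard : T.card = S.card - 1 := by rw [hT, Finset.card_erase_of_mem hp]
    have hcompl : (T.filter (fun r => key p < key r)).card
        + (T.filter (fun r => ¬ key p < key r)).card = T.card :=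
      Finset.card_filter_add_card_filter_not _
    constructor
    · -- q on the "left": key p < key q
      intro hkq
      have hposset : S.filter (fun r => 0 < det2 (q - p) (r - p)) = A1 ∪ B2 := by
        ext r
        simp only [Finset.mem_filter, Finset.mem_union, hA1, hB2]
        constructor
        · rintro ⟨hrS, hdet⟩
          obtain ⟨hrT, hrq, _⟩ := (hmemS r).1 ⟨hrS, hdet⟩
          by_cases hkr : key p < key r
          · exact Or.inl ⟨hrT, hkr, by
              have := (hTq r hrT hrq hkr).1 hdet; rwa [if_pos hkq] at this⟩
          · exact Or.inr ⟨hrT, hkr, by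
              have := (hTq' r hrT hrq hkr).1 hdet; rwa [if_pos hkq] at this⟩
        · rintro (⟨hrT, hkr, hτlt⟩ | ⟨hrT, hkr, hτlt⟩)
          · have hrq : r ≠ q := fun he => (lt_irrefl _ (he ▸ hτlt))
            refine ⟨(hTmem hrT).1, ?_⟩
            rw [hTq r hrT hrq hkr, if_pos hkq]; exact hτlt
          · have hrq : r ≠ q := fun he => hkr (he ▸ hkq)
            refine ⟨(hTmem hrT).1, ?_⟩
            rw [hTq' r hrT hrq hkr, if_pos hkq]; exact hτlt
      have hsplitA : T.filter (fun r => key p < key r) = (A1 ∪ A2) ∪ {q} := by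
        ext r
        simp only [Finset.mem_filter, Finset.mem_union, Finset.mem_singleton, hA1, hA2]
        constructor
        · rintro ⟨hrT, hkr⟩
          rcases lt_trichotomy (τ r) (τ q) with hx | hx | hx
          · exact Or.inl (Or.inl ⟨hrT, hkr, hx⟩)
          · exact Or.inr (hτinj r hrT q hq hx)
          · exact Or.inl (Or.inr ⟨hrT, hkr, hx⟩)
        · rintro ((⟨hrT, hkr, _⟩ | ⟨hrT, hkr, _⟩) | rfl)
          · exact ⟨hrT, hkr⟩
          · exact ⟨hrT, hkr⟩
          · exact ⟨hq, hkq⟩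
      have hdisjq : Disjoint (A1 ∪ A2) ({q} : Finset (ℝ × ℝ)) := by
        rw [Finset.disjoint_right]
        intro r hr hmem
        rw [Finset.mem_singleton] at hr
        subst hr
        rcases Finset.mem_union.1 hmem with h1 | h1 <;>
          · simp only [hA1, hA2, Finset.mem_filter] at h1
            exact lt_irrefl _ h1.2.2
      have eq2 : (T.filter (fun r => key p < key r)).card = A1.card + A2.card + 1 := by
        rw [hsplitA, Finset.card_union_of_disjoint hdisjq,
          Finset.card_union_of_disjoint hdisjA1A2, Finset.card_singleton]
      have eq1 : (S.filter (fun r => 0 < det2 (q - p) (r - p))).card = A1.card + B2.card := by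
        rw [hposset, Finset.card_union_of_disjoint hdisjA1B2]
      rw [eq1, hLevq, hh₀, eq2]
      push_cast
      ring
    · -- q on the "right"
      intro hkq
      have hposset : S.filter (fun r => 0 < det2 (q - p) (r - p)) = A2 ∪ B1 := by
        ext r
        simp only [Finset.mem_filter, Finset.mem_union, hA2, hB1]
        constructor
        · rintro ⟨hrS, hdet⟩
          obtain ⟨hrT, hrq, _⟩ := (hmemS r).1 ⟨hrS, hdet⟩
          by_cases hkr : key p < key r
          · exact Or.inl ⟨hrT, hkr, by
              have := (hTq r hrT hrq hkr).1 hdet; rwa [if_neg hkq] at this⟩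
          · exact Or.inr ⟨hrT, hkr, by
              have := (hTq' r hrT hrq hkr).1 hdet; rwa [if_neg hkq] at this⟩
        · rintro (⟨hrT, hkr, hτlt⟩ | ⟨hrT, hkr, hτlt⟩)
          · have hrq : r ≠ q := fun he => hkq (he ▸ hkr)
            refine ⟨(hTmem hrT).1, ?_⟩
            rw [hTq r hrT hrq hkr, if_neg hkq]; exact hτlt
          · have hrq : r ≠ q := fun he => (lt_irrefl _ (he ▸ hτlt))
            refine ⟨(hTmem hrT).1, ?_⟩
            rw [hTq' r hrT hrq hkr, if_neg hkq]; exact hτlt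
      have hsplitB : T.filter (fun r => ¬ key p < key r) = (B1 ∪ B2) ∪ {q} := by
        ext r
        simp only [Finset.mem_filter, Finset.mem_union, Finset.mem_singleton, hB1, hB2]
        constructor
        · rintro ⟨hrT, hkr⟩
          rcases lt_trichotomy (τ r) (τ q) with hx | hx | hx
          · exact Or.inl (Or.inl ⟨hrT, hkr, hx⟩)
          · exact Or.inr (hτinj r hrT q hq hx)
          · exact Or.inl (Or.inr ⟨hrT, hkr, hx⟩)
        · rintro ((⟨hrT, hkr, _⟩ | ⟨hrT, hkr, _⟩) | rfl)
          · exact ⟨hrT, hkr⟩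
          · exact ⟨hrT, hkr⟩
          · exact ⟨hq, hkq⟩
      have hdisjq : Disjoint (B1 ∪ B2) ({q} : Finset (ℝ × ℝ)) := by
        rw [Finset.disjoint_right]
        intro r hr hmem
        rw [Finset.mem_singleton] at hr
        subst hr
        rcases Finset.mem_union.1 hmem with h1 | h1 <;>
          · simp only [hB1, hB2, Finset.mem_filter] at h1
            exact lt_irrefl _ h1.2.2
      have eq2 : (T.filter (fun r => ¬ key p < key r)).card = B1.card + B2.card + 1 := by
        rw [hsplitB, Finset.card_union_of_disjoint hdisjq,
          Finset.card_union_of_disjoint hdisjB1B2, Finset.card_singleton]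
      have eq1 : (S.filter (fun r => 0 < det2 (q - p) (r - p))).card = A2.card + B1.card := by
        rw [hposset, Finset.card_union_of_disjoint hdisjA2B1]
      rw [eq1, hLevq, hh₀]
      have h1S : 1 ≤ S.card := le_trans (by norm_num) h2
      omega
  obtain ⟨t, htc⟩ := heven
  have ht1 : 1 ≤ t := by omega
  set m : ℤ := (t : ℤ) - 1 with hm
  have hhalf : (S.card - 2) / 2 = t - 1 := by omega
  have hiff1 : ∀ q ∈ T, key p < key q → (IsHalving S p q ↔ Lev q = m + 1) := by
    intro q hq hkq
    rw [isHalving_iff S hgp ⟨t, htc⟩ hp (hTmem hq).1 (Ne.symm (hTmem hq).2), hhalf]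
    have hc := (hcnt q hq).1 hkq
    constructor <;> intro he <;> omega
  have hiff2 : ∀ q ∈ T, ¬ key p < key q → (IsHalving S p q ↔ Lev q = m) := by
    intro q hq hkq
    rw [isHalving_iff S hgp ⟨t, htc⟩ hp (hTmem hq).1 (Ne.symm (hTmem hq).2), hhalf]
    have hc := (hcnt q hq).2 hkq
    constructor <;> intro he <;> omega
  have hfeq1 : S.filter (fun q => IsHalving S p q ∧ key p < key q)
      = T.filter (fun q => s q = -1 ∧ h₀ + ∑ r ∈ T.filter (fun r => τ q < τ r), s r = m + 1) := by
    ext q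
    simp only [Finset.mem_filter]
    constructor
    · rintro ⟨hqS, hh, hkq⟩
      have hqT : q ∈ T := Finset.mem_erase.2 ⟨fun he => (lt_irrefl _ (he ▸ hkq)), hqS⟩
      refine ⟨hqT, by simp only [hs, if_pos hkq], ?_⟩
      have hx := (hiff1 q hqT hkq).1 hh
      simpa [hLev] using hx
    · rintro ⟨hqT, hsq, hlev⟩
      have hkq : key p < key q := by
        by_contra hc
        simp only [hs, if_neg hc] at hsq
        norm_num at hsq
      exact ⟨(hTmem hqT).1, ⟨(hiff1 q hqT hkq).2 (by simpa [hLev] using hlev), hkq⟩⟩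
  have hfeq2 : S.filter (fun q => IsHalving S p q ∧ key q < key p)
      = T.filter (fun q => s q = 1 ∧ h₀ + ∑ r ∈ T.filter (fun r => τ q < τ r), s r = m) := by
    ext q
    simp only [Finset.mem_filter]
    constructor
    · rintro ⟨hqS, hh, hkq⟩
      have hqp : q ≠ p := fun he => lt_irrefl _ (he ▸ hkq)
      have hqT : q ∈ T := Finset.mem_erase.2 ⟨hqp, hqS⟩
      have hnk : ¬ key p < key q := not_lt.2 (le_of_lt hkq)
      refine ⟨hqT, by simp only [hs, if_neg hnk], ?_⟩
      have hx := (hiff2 q hqT hnk).1 hh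
      simpa [hLev] using hx
    · rintro ⟨hqT, hsq, hlev⟩
      have hnk : ¬ key p < key q := by
        intro hc; simp only [hs, if_pos hc] at hsq; norm_num at hsq
      have hkq : key q < key p := lt_of_le_of_ne (not_lt.1 hnk) (hkne q hqT)
      exact ⟨(hTmem hqT).1, ⟨(hiff2 q hqT hnk).2 (by simpa [hLev] using hlev), hkq⟩⟩
  have hsval : ∀ q ∈ T, s q = 1 ∨ s q = -1 := by
    intro q hq
    simp only [hs]
    split_ifs
    · exact Or.inr rfl
    · exact Or.inl rfl
  have CI := crossing_identity τ s h₀ m T hτinj hsval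
  rw [hfeq1, hfeq2]
  refine ⟨?_, ?_⟩ <;> split_ifs at CI <;> omega

lemma isHalving_symm {S : Finset (ℝ × ℝ)} {p q : ℝ × ℝ} (h : IsHalving S p q) :
    IsHalving S q p := by
  obtain ⟨hp, hq, hpq, h1, h2⟩ := h
  have hpt : ∀ X : ℝ × ℝ, det2 (p - q) (X - q) = - det2 (q - p) (X - p) := by
    intro X
    simp only [det2, Prod.fst_sub, Prod.snd_sub]
    ring
  have e1 : {X ∈ (S : Set (ℝ × ℝ)) | 0 < det2 (p - q) (X - q)}
      = {X ∈ (S : Set (ℝ × ℝ)) | det2 (q - p) (X - p) < 0} := by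
    ext X
    constructor
    · rintro ⟨hX, hd⟩
      exact ⟨hX, by have := hpt X; linarith⟩
    · rintro ⟨hX, hd⟩
      exact ⟨hX, by have := hpt X; linarith⟩
  have e2 : {X ∈ (S : Set (ℝ × ℝ)) | det2 (p - q) (X - q) < 0}
      = {X ∈ (S : Set (ℝ × ℝ)) | 0 < det2 (q - p) (X - p)} := by
    ext X
    constructor
    · rintro ⟨hX, hd⟩
      exact ⟨hX, by have := hpt X; linarith⟩
    · rintro ⟨hX, hd⟩
      exact ⟨hX, by have := hpt X; linarith⟩
  exact ⟨hq, hp, Ne.symm hpq, by rw [e1]; exact h2, by rw [e2]; exact h1⟩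

lemma eps_exists (S : Finset (ℝ × ℝ)) (a : ℝ × ℝ) :
    ∃ ε : ℝ, 0 < ε ∧ ∀ x ∈ S, ∀ y ∈ S, dot2 a x < dot2 a y →
      dot2 a x + ε * det2 a x < dot2 a y + ε * det2 a y := by
  classical
  set G : Finset ℝ := ((S ×ˢ S).filter (fun pr => dot2 a pr.1 < dot2 a pr.2)).image
      (fun pr => (dot2 a pr.2 - dot2 a pr.1) / (|det2 a pr.1 - det2 a pr.2| + 1)) with hG
  have hmemval : ∀ x ∈ S, ∀ y ∈ S, dot2 a x < dot2 a y →
      (dot2 a y - dot2 a x) / (|det2 a x - det2 a y| + 1) ∈ G := by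
    intro x hx y hy hlt
    have hpair : ((x, y) : (ℝ × ℝ) × (ℝ × ℝ)) ∈
        (S ×ˢ S).filter (fun pr => dot2 a pr.1 < dot2 a pr.2) := by
      rw [Finset.mem_filter, Finset.mem_product]
      exact ⟨⟨hx, hy⟩, hlt⟩
    rw [hG]
    exact Finset.mem_image_of_mem _ hpair
  rcases G.eq_empty_or_nonempty with hGe | hGne
  · refine ⟨1, one_pos, ?_⟩
    intro x hx y hy hlt
    exfalso
    have := hmemval x hx y hy hlt
    rw [hGe] at this
    exact absurd this (Finset.notMem_empty _)
  · have hpos : 0 < G.min' hGne := by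
      set v := G.min' hGne with hv
      have hmem : v ∈ G := G.min'_mem hGne
      rw [hG, Finset.mem_image] at hmem
      obtain ⟨pr, hpr, he⟩ := hmem
      rw [Finset.mem_filter] at hpr
      have h1 : 0 < dot2 a pr.2 - dot2 a pr.1 := by linarith [hpr.2]
      have h2 : 0 < |det2 a pr.1 - det2 a pr.2| + 1 := by positivity
      have h3 : 0 < (dot2 a pr.2 - dot2 a pr.1) / (|det2 a pr.1 - det2 a pr.2| + 1) := by positivity
      rwa [he] at h3
    refine ⟨G.min' hGne, hpos, ?_⟩
    intro x hx y hy hlt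
    set ε := G.min' hGne
    have hle : ε ≤ (dot2 a y - dot2 a x) / (|det2 a x - det2 a y| + 1) :=
      Finset.min'_le _ _ (hmemval x hx y hy hlt)
    have hden : 0 < |det2 a x - det2 a y| + 1 := by positivity
    have hmul : ε * (|det2 a x - det2 a y| + 1) ≤ dot2 a y - dot2 a x :=
      (le_div_iff₀ hden).1 hle
    have h1 : ε * (det2 a x - det2 a y) ≤ ε * |det2 a x - det2 a y| :=
      mul_le_mul_of_nonneg_left (le_abs_self _) hpos.le
    have h3 : ε * (|det2 a x - det2 a y| + 1) = ε * |det2 a x - det2 a y| + ε := by ring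
    nlinarith


/-- if `w` halving segments of `S` straddle a line through no
point of `S`, then `n ≥ 2w`. -/
theorem stmt_16 (S : Finset (ℝ × ℝ)) (heven : Even S.card) (h4 : 4 ≤ S.card)
    (hgp : GenPos S) (a : ℝ × ℝ) (c : ℝ) (ha : a ≠ 0)
    (hmiss : ∀ P ∈ S, dot2 a P ≠ c) :
    2 * {s : Finset (ℝ × ℝ) | ∃ P Q : ℝ × ℝ, s = {P, Q} ∧ IsHalving S P Q ∧
          (dot2 a P - c) * (dot2 a Q - c) < 0}.ncard ≤ S.card := by
  classical
  obtain ⟨ε, hεpos, hεmono⟩ := eps_exists S a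
  set key : ℝ × ℝ → ℝ := fun x => dot2 a x + ε * det2 a x with hkeydef
  set d : ℝ × ℝ := (a.2 + ε * a.1, -a.1 + ε * a.2) with hd
  have hkey : ∀ x y : ℝ × ℝ, det2 d (x - y) = key x - key y := by
    intro x y
    simp only [hkeydef, hd, det2, dot2, Prod.fst_sub, Prod.snd_sub]
    ring
  have hkinj : ∀ x ∈ S, ∀ y ∈ S, key x = key y → x = y := by
    intro x hx y hy he
    rcases lt_trichotomy (dot2 a x) (dot2 a y) with hlt | heq | hgt
    · exact absurd he (ne_of_lt (hεmono x hx y hy hlt))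
    · have hdet : det2 a x = det2 a y := by
        have h1 : ε * det2 a x = ε * det2 a y := by
          simp only [hkeydef] at he; linarith
        exact mul_left_cancel₀ (ne_of_gt hεpos) h1
      exact inj_dot_det ha heq hdet
    · exact absurd he.symm (ne_of_lt (hεmono y hy x hx hgt))
  set L := S.filter (fun x => dot2 a x < c) with hL
  set R := S.filter (fun x => c < dot2 a x) with hR
  have hLmem : ∀ {x}, x ∈ L ↔ x ∈ S ∧ dot2 a x < c := by
    intro x; rw [hL, Finset.mem_filter]
  have hRmem : ∀ {x}, x ∈ R ↔ x ∈ S ∧ c < dot2 a x := by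
    intro x; rw [hR, Finset.mem_filter]
  have hunion : L ∪ R = S := by
    ext x
    rw [Finset.mem_union, hLmem, hRmem]
    constructor
    · rintro (⟨hx, _⟩ | ⟨hx, _⟩) <;> exact hx
    · intro hx
      rcases lt_trichotomy (dot2 a x) c with h | h | h
      · exact Or.inl ⟨hx, h⟩
      · exact absurd h (hmiss x hx)
      · exact Or.inr ⟨hx, h⟩
  have hdisjLR : Disjoint L R := by
    rw [Finset.disjoint_left]
    intro x h1 h2
    rw [hLmem] at h1; rw [hRmem] at h2
    linarith [h1.2, h2.2]
  have hkeyLR : ∀ x ∈ L, ∀ y ∈ R, key x < key y := by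
    intro x hx y hy
    exact hεmono x (hLmem.1 hx).1 y (hRmem.1 hy).1 (lt_trans (hLmem.1 hx).2 (hRmem.1 hy).2)
  -- the edge finset
  set E := L.biUnion (fun p => (R.filter (fun q => IsHalving S p q)).image
      (fun q => ({p, q} : Finset (ℝ × ℝ)))) with hE
  have hEmem : ∀ e, e ∈ E ↔ ∃ p, p ∈ L ∧ ∃ q, q ∈ R ∧ IsHalving S p q ∧ e = {p, q} := by
    intro e
    rw [hE, Finset.mem_biUnion]
    constructor
    · rintro ⟨p, hpL, hmem⟩
      rw [Finset.mem_image] at hmem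
      obtain ⟨q, hq, he⟩ := hmem
      rw [Finset.mem_filter] at hq
      exact ⟨p, hpL, q, hq.1, hq.2, he.symm⟩
    · rintro ⟨p, hpL, q, hqR, hh, rfl⟩
      exact ⟨p, hpL, Finset.mem_image_of_mem _ (Finset.mem_filter.2 ⟨hqR, hh⟩)⟩
  have hset : {s : Finset (ℝ × ℝ) | ∃ P Q : ℝ × ℝ, s = {P, Q} ∧ IsHalving S P Q ∧
      (dot2 a P - c) * (dot2 a Q - c) < 0} = (E : Set (Finset (ℝ × ℝ))) := by
    ext e
    simp only [Set.mem_setOf_eq, Finset.mem_coe]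
    rw [hEmem]
    constructor
    · rintro ⟨P, Q, rfl, hh, hcross⟩
      have hPS := hh.1
      have hQS := hh.2.1
      rcases lt_trichotomy (dot2 a P) c with h1 | h1 | h1
      · have h2 : c < dot2 a Q := by
          rcases lt_trichotomy (dot2 a Q) c with h2 | h2 | h2
          · nlinarith
          · exact absurd h2 (hmiss Q hQS)
          · exact h2
        exact ⟨P, hLmem.2 ⟨hPS, h1⟩, Q, hRmem.2 ⟨hQS, h2⟩, hh, rfl⟩
      · exact absurd h1 (hmiss P hPS)
      · have h2 : dot2 a Q < c := by
          rcases lt_trichotomy (dot2 a Q) c with h2 | h2 | h2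
          · exact h2
          · exact absurd h2 (hmiss Q hQS)
          · nlinarith
        exact ⟨Q, hLmem.2 ⟨hQS, h2⟩, P, hRmem.2 ⟨hPS, h1⟩, isHalving_symm hh,
          Finset.pair_comm P Q⟩
    · rintro ⟨p, hpL, q, hqR, hh, rfl⟩
      refine ⟨p, q, rfl, hh, ?_⟩
      have h1 : dot2 a p - c < 0 := sub_neg.2 (hLmem.1 hpL).2
      have h2 : 0 < dot2 a q - c := sub_pos.2 (hRmem.1 hqR).2
      exact mul_neg_of_neg_of_pos h1 h2
  rw [hset, Set.ncard_coe_finset]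
  -- cardinality of E
  have hEcard : E.card = ∑ p ∈ L, (R.filter (fun q => IsHalving S p q)).card := by
    rw [hE, Finset.card_biUnion]
    · refine Finset.sum_congr rfl (fun p hp => ?_)
      apply Finset.card_image_of_injOn
      intro q hq q' hq' he
      have hq2 := (hRmem.1 (Finset.mem_filter.1 hq).1).2
      have hq'2 := (hRmem.1 (Finset.mem_filter.1 hq').1).2
      have hp2 := (hLmem.1 hp).2
      have he' : ({p, q} : Finset (ℝ × ℝ)) = {p, q'} := he
      have : q ∈ ({p, q'} : Finset (ℝ × ℝ)) := by rw [← he']; simp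
      rcases Finset.mem_insert.1 this with h | h
      · exfalso; subst h; linarith
      · exact Finset.mem_singleton.1 h
    · intro p hp p' hp' hne
      simp only [Finset.disjoint_left]
      intro e he he'
      rw [Finset.mem_image] at he he'
      obtain ⟨q, hq, rfl⟩ := he
      obtain ⟨q', hq', heq⟩ := he'
      have hp2 := (hLmem.1 hp).2
      have hp'2 := (hLmem.1 hp').2
      have hq'2 := (hRmem.1 (Finset.mem_filter.1 hq').1).2
      have : p ∈ ({p', q'} : Finset (ℝ × ℝ)) := by rw [heq]; simp
      rcases Finset.mem_insert.1 this with h | h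
      · exact hne h
      · rw [Finset.mem_singleton] at h; subst h; linarith
  -- double counting helper
  have count_pairs : ∀ (U V : Finset (ℝ × ℝ)) (Rel : ℝ × ℝ → ℝ × ℝ → Prop)
      (inst : ∀ p q, Decidable (Rel p q)),
      ∑ p ∈ U, (@Finset.filter _ (fun q => Rel p q) (fun q => inst p q) V).card
        = ∑ q ∈ V, (@Finset.filter _ (fun p => Rel p q) (fun p => inst p q) U).card := by
    intro U V Rel inst
    simp only [Finset.card_filter]
    exact Finset.sum_comm
  -- split S-filters into L and R parts
  have hsplitP : ∀ (P : ℝ × ℝ → Prop) (inst : DecidablePred P),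
      (@Finset.filter _ P inst S).card
        = (@Finset.filter _ P inst L).card + (@Finset.filter _ P inst R).card := by
    intro P inst
    conv_lhs => rw [← hunion]
    rw [Finset.filter_union,
      Finset.card_union_of_disjoint (Finset.disjoint_filter_filter hdisjLR)]
  have hperp : ∀ p ∈ S,
      (((S.filter (fun q => IsHalving S p q ∧ key p < key q)).card : ℤ)
        - ((S.filter (fun q => IsHalving S p q ∧ key q < key p)).card : ℤ)) ≤ 1 ∧
      (((S.filter (fun q => IsHalving S p q ∧ key q < key p)).card : ℤ)
        - ((S.filter (fun q => IsHalving S p q ∧ key p < key q)).card : ℤ)) ≤ 1 :=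
    fun p hp => perpoint S hgp heven (by omega) key d hkey hkinj hp
  -- per-point decompositions for p ∈ L
  have hcA : ∀ p ∈ L, (S.filter (fun q => IsHalving S p q ∧ key p < key q)).card
      = (L.filter (fun q => IsHalving S p q ∧ key p < key q)).card
        + (R.filter (fun q => IsHalving S p q)).card := by
    intro p hp
    rw [hsplitP _ _]
    congr 1
    refine congrArg Finset.card (Finset.filter_congr ?_)
    intro q hq
    simp only [and_iff_left_iff_imp]
    intro _
    exact hkeyLR p hp q hq
  have hcB : ∀ p ∈ L, (S.filter (fun q => IsHalving S p q ∧ key q < key p)).card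
      = (L.filter (fun q => IsHalving S p q ∧ key q < key p)).card := by
    intro p hp
    rw [hsplitP _ _]
    have : R.filter (fun q => IsHalving S p q ∧ key q < key p) = ∅ := by
      apply Finset.filter_false_of_mem
      intro q hq hcon
      exact absurd (hkeyLR p hp q hq) (not_lt.2 (le_of_lt hcon.2))
    rw [this, Finset.card_empty, add_zero]
  -- per-point decompositions for p ∈ R
  have hcA' : ∀ p ∈ R, (S.filter (fun q => IsHalving S p q ∧ key p < key q)).card
      = (R.filter (fun q => IsHalving S p q ∧ key p < key q)).card := by
    intro p hp
    rw [hsplitP _ _]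
    have : L.filter (fun q => IsHalving S p q ∧ key p < key q) = ∅ := by
      apply Finset.filter_false_of_mem
      intro q hq hcon
      exact absurd (hkeyLR q hq p hp) (not_lt.2 (le_of_lt hcon.2))
    rw [this, Finset.card_empty, zero_add]
  have hcB' : ∀ p ∈ R, (S.filter (fun q => IsHalving S p q ∧ key q < key p)).card
      = (L.filter (fun q => IsHalving S p q)).card
        + (R.filter (fun q => IsHalving S p q ∧ key q < key p)).card := by
    intro p hp
    rw [hsplitP _ _]
    congr 1
    refine congrArg Finset.card (Finset.filter_congr ?_)
    intro q hq
    simp only [and_iff_left_iff_imp]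
    intro _
    exact hkeyLR q hq p hp
  -- swaps
  have hswapL : ∑ p ∈ L, (L.filter (fun q => IsHalving S p q ∧ key p < key q)).card
      = ∑ p ∈ L, (L.filter (fun q => IsHalving S p q ∧ key q < key p)).card := by
    rw [count_pairs L L (fun p q => IsHalving S p q ∧ key p < key q) _]
    refine Finset.sum_congr rfl (fun p hp => ?_)
    refine congrArg Finset.card (Finset.filter_congr ?_)
    intro q hq
    constructor
    · rintro ⟨hh, hk⟩; exact ⟨isHalving_symm hh, hk⟩
    · rintro ⟨hh, hk⟩; exact ⟨isHalving_symm hh, hk⟩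
  have hswapR : ∑ p ∈ R, (R.filter (fun q => IsHalving S p q ∧ key p < key q)).card
      = ∑ p ∈ R, (R.filter (fun q => IsHalving S p q ∧ key q < key p)).card := by
    rw [count_pairs R R (fun p q => IsHalving S p q ∧ key p < key q) _]
    refine Finset.sum_congr rfl (fun p hp => ?_)
    refine congrArg Finset.card (Finset.filter_congr ?_)
    intro q hq
    constructor
    · rintro ⟨hh, hk⟩; exact ⟨isHalving_symm hh, hk⟩
    · rintro ⟨hh, hk⟩; exact ⟨isHalving_symm hh, hk⟩
  have hswapLR : ∑ p ∈ L, (R.filter (fun q => IsHalving S p q)).card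
      = ∑ q ∈ R, (L.filter (fun p => IsHalving S q p)).card := by
    rw [count_pairs L R (fun p q => IsHalving S p q) _]
    refine Finset.sum_congr rfl (fun q hq => ?_)
    refine congrArg Finset.card (Finset.filter_congr ?_)
    intro p hp
    constructor
    · intro hh; exact isHalving_symm hh
    · intro hh; exact isHalving_symm hh
  -- the two bounds
  have hboundL : (∑ p ∈ L, (R.filter (fun q => IsHalving S p q)).card : ℤ) ≤ L.card := by
    have e1 : ∑ p ∈ L, (((S.filter (fun q => IsHalving S p q ∧ key p < key q)).card : ℤ)
        - ((S.filter (fun q => IsHalving S p q ∧ key q < key p)).card : ℤ))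
        = ∑ p ∈ L, ((R.filter (fun q => IsHalving S p q)).card : ℤ) := by
      rw [Finset.sum_sub_distrib]
      have eA : ∑ p ∈ L, ((S.filter (fun q => IsHalving S p q ∧ key p < key q)).card : ℤ)
          = ∑ p ∈ L, (((L.filter (fun q => IsHalving S p q ∧ key p < key q)).card : ℤ)
            + ((R.filter (fun q => IsHalving S p q)).card : ℤ)) :=
        Finset.sum_congr rfl (fun p hp => by rw [hcA p hp]; push_cast; ring)
      have eB : ∑ p ∈ L, ((S.filter (fun q => IsHalving S p q ∧ key q < key p)).card : ℤ)
          = ∑ p ∈ L, ((L.filter (fun q => IsHalving S p q ∧ key q < key p)).card : ℤ) :=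
        Finset.sum_congr rfl (fun p hp => by rw [hcB p hp])
      rw [eA, eB, Finset.sum_add_distrib]
      have : ∑ p ∈ L, ((L.filter (fun q => IsHalving S p q ∧ key p < key q)).card : ℤ)
          = ∑ p ∈ L, ((L.filter (fun q => IsHalving S p q ∧ key q < key p)).card : ℤ) := by
        exact_mod_cast congrArg (fun n : ℕ => (n : ℤ)) hswapL
      rw [this]
      ring
    rw [← e1]
    calc ∑ p ∈ L, (((S.filter (fun q => IsHalving S p q ∧ key p < key q)).card : ℤ)
        - ((S.filter (fun q => IsHalving S p q ∧ key q < key p)).card : ℤ))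
        ≤ ∑ _p ∈ L, (1 : ℤ) :=
          Finset.sum_le_sum (fun p hp => (hperp p (hLmem.1 hp).1).1)
      _ = L.card := by simp
  have hboundR : (∑ p ∈ R, (L.filter (fun q => IsHalving S p q)).card : ℤ) ≤ R.card := by
    have e1 : ∑ p ∈ R, (((S.filter (fun q => IsHalving S p q ∧ key q < key p)).card : ℤ)
        - ((S.filter (fun q => IsHalving S p q ∧ key p < key q)).card : ℤ))
        = ∑ p ∈ R, ((L.filter (fun q => IsHalving S p q)).card : ℤ) := by
      rw [Finset.sum_sub_distrib]
      have eA : ∑ p ∈ R, ((S.filter (fun q => IsHalving S p q ∧ key p < key q)).card : ℤ)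
          = ∑ p ∈ R, ((R.filter (fun q => IsHalving S p q ∧ key p < key q)).card : ℤ) :=
        Finset.sum_congr rfl (fun p hp => by rw [hcA' p hp])
      have eB : ∑ p ∈ R, ((S.filter (fun q => IsHalving S p q ∧ key q < key p)).card : ℤ)
          = ∑ p ∈ R, (((L.filter (fun q => IsHalving S p q)).card : ℤ)
            + ((R.filter (fun q => IsHalving S p q ∧ key q < key p)).card : ℤ)) :=
        Finset.sum_congr rfl (fun p hp => by rw [hcB' p hp]; push_cast; ring)
      rw [eA, eB, Finset.sum_add_distrib]
      have : ∑ p ∈ R, ((R.filter (fun q => IsHalving S p q ∧ key p < key q)).card : ℤ)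
          = ∑ p ∈ R, ((R.filter (fun q => IsHalving S p q ∧ key q < key p)).card : ℤ) := by
        exact_mod_cast congrArg (fun n : ℕ => (n : ℤ)) hswapR
      rw [this]
      ring
    rw [← e1]
    calc ∑ p ∈ R, (((S.filter (fun q => IsHalving S p q ∧ key q < key p)).card : ℤ)
        - ((S.filter (fun q => IsHalving S p q ∧ key p < key q)).card : ℤ))
        ≤ ∑ _p ∈ R, (1 : ℤ) :=
          Finset.sum_le_sum (fun p hp => (hperp p (hRmem.1 hp).1).2)
      _ = R.card := by simp
  have hcardLR : L.card + R.card = S.card := by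
    rw [← hunion, Finset.card_union_of_disjoint hdisjLR]
  -- finish
  have hE1 : (E.card : ℤ) = ∑ p ∈ L, ((R.filter (fun q => IsHalving S p q)).card : ℤ) := by
    rw [hEcard]; push_cast; rfl
  have hE2 : (∑ p ∈ L, ((R.filter (fun q => IsHalving S p q)).card : ℤ))
      = ∑ q ∈ R, ((L.filter (fun p => IsHalving S q p)).card : ℤ) := by
    exact_mod_cast congrArg (fun n : ℕ => (n : ℤ)) hswapLR
  have final : (2 * E.card : ℤ) ≤ (S.card : ℤ) := by
    have h1 : (∑ p ∈ L, ((R.filter (fun q => IsHalving S p q)).card : ℤ)) ≤ (L.card : ℤ) := by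
      exact_mod_cast hboundL
    have h2 : (∑ q ∈ R, ((L.filter (fun p => IsHalving S q p)).card : ℤ)) ≤ (R.card : ℤ) := by
      exact_mod_cast hboundR
    have h3 : ((L.card : ℤ) + R.card) = S.card := by exact_mod_cast hcardLR
    have := hE1
    nlinarith [hE1, hE2, h1, h2, h3]
  exact_mod_cast final
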